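/- The harmonic ensemble X = {X_1,…,X_N} on the one-dimensional torus with parameter T (so N = 2T+1) satisfies E D_{per,2}²(X) = (1/(π²N²)) ∑_{k=1}^N 1/k + (1/(π²N)) ∑_{k=N+1}^∞ 1/k², and hence E D_{per,2}²(X) = (log N + γ + 1)/(π²N²) + O(1/N³), where γ is Euler's constant. -/

import Mathlib

open MeasureTheory Real Filter Topology

/-- The exact value `(1/(π²N²))∑_{k=1}^N 1/k + (1/(π²N))∑_{k=N+1}^∞ 1/k²`. -/
noncomputable def S15 (N : ℕ) : ℝ :=
  1/(π^2*N^2) * ∑ k ∈ Finset.Icc 1 N, (1/(k:ℝ)) +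
    1/(π^2*N) * ∑' j : ℕ, 1/((N:ℝ)+1+j)^2


lemma sumNat : Summable (fun n : ℕ => 1/((n:ℝ)+1)^2) := by
  have h := Real.summable_one_div_nat_pow.mpr (le_refl 2)
  have := (summable_nat_add_iff 1).mpr h
  apply this.congr
  intro n
  push_cast
  ring

lemma sumShift (N : ℕ) : Summable (fun j : ℕ => 1/((N:ℝ)+1+j)^2) := by
  apply Summable.of_nonneg_of_le (fun j => by positivity) _ sumNat
  intro j
  have h1 : (0:ℝ) < (j:ℝ)+1 := by positivity
  have h2 : ((j:ℝ)+1) ≤ (N:ℝ)+1+j := by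
    have : (0:ℝ) ≤ N := Nat.cast_nonneg N
    linarith
  apply one_div_le_one_div_of_le (by positivity)
  nlinarith

lemma tsum_shift_le (N : ℕ) (hN : 1 ≤ N) :
    ∑' j : ℕ, 1/((N:ℝ)+1+j)^2 ≤ 1/(N:ℝ) := by
  have hNpos : (0:ℝ) < N := by exact_mod_cast hN
  apply Real.tsum_le_of_sum_range_le (fun j => by positivity)
  intro m
  have key : ∀ j ∈ Finset.range m, 1/((N:ℝ)+1+j)^2 ≤
      (fun i : ℕ => 1/((N:ℝ)+i)) j - (fun i : ℕ => 1/((N:ℝ)+i)) (j+1) := by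
    intro j _
    simp only
    have h1 : (0:ℝ) < (N:ℝ)+j := by positivity
    have h2 : (0:ℝ) < (N:ℝ)+(j+1) := by positivity
    have h3 : (0:ℝ) < (N:ℝ)+1+j := by positivity
    push_cast
    rw [div_sub_div _ _ (ne_of_gt h1) (ne_of_gt h2)]
    rw [div_le_div_iff₀ (by positivity) (by positivity)]
    nlinarith
  calc ∑ j ∈ Finset.range m, 1/((N:ℝ)+1+j)^2
      ≤ ∑ j ∈ Finset.range m, ((fun i : ℕ => 1/((N:ℝ)+i)) j - (fun i : ℕ => 1/((N:ℝ)+i)) (j+1)) :=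
        Finset.sum_le_sum key
    _ = 1/((N:ℝ)+(0:ℕ)) - 1/((N:ℝ)+m) := Finset.sum_range_sub' (fun i : ℕ => 1/((N:ℝ)+i)) m
    _ ≤ 1/(N:ℝ) := by
        have : (0:ℝ) ≤ 1/((N:ℝ)+m) := by positivity
        simp only [Nat.cast_zero, add_zero]
        linarith

lemma le_tsum_shift (N : ℕ) :
    1/((N:ℝ)+1) ≤ ∑' j : ℕ, 1/((N:ℝ)+1+j)^2 := by
  have hlim : Tendsto (fun m : ℕ => 1/((N:ℝ)+1) - 1/((N:ℝ)+1+m)) atTop (𝓝 (1/((N:ℝ)+1))) := by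
    have h1 : Tendsto (fun m : ℕ => ((N:ℝ)+1+m)) atTop atTop := by
      apply tendsto_atTop_add_const_left
      exact tendsto_natCast_atTop_atTop
    have h2 : Tendsto (fun m : ℕ => 1/((N:ℝ)+1+m)) atTop (𝓝 0) := by
      simp only [one_div]
      exact h1.inv_tendsto_atTop
    simpa using tendsto_const_nhds.sub h2
  apply le_of_tendsto hlim
  filter_upwards with m
  have key : ∀ j ∈ Finset.range m,
      (fun i : ℕ => 1/((N:ℝ)+1+i)) j - (fun i : ℕ => 1/((N:ℝ)+1+i)) (j+1) ≤ 1/((N:ℝ)+1+j)^2 := by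
    intro j _
    simp only
    have h1 : (0:ℝ) < (N:ℝ)+1+j := by positivity
    have h2 : (0:ℝ) < (N:ℝ)+1+(j+1) := by positivity
    push_cast
    rw [div_sub_div _ _ (ne_of_gt h1) (ne_of_gt h2)]
    rw [div_le_div_iff₀ (by positivity) (by positivity)]
    nlinarith
  calc 1/((N:ℝ)+1) - 1/((N:ℝ)+1+m)
      = ∑ j ∈ Finset.range m, ((fun i : ℕ => 1/((N:ℝ)+1+i)) j - (fun i : ℕ => 1/((N:ℝ)+1+i)) (j+1)) := by
        rw [Finset.sum_range_sub' (fun i : ℕ => 1/((N:ℝ)+1+i)) m]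
        norm_num
    _ ≤ ∑ j ∈ Finset.range m, 1/((N:ℝ)+1+j)^2 := Finset.sum_le_sum key
    _ ≤ ∑' j : ℕ, 1/((N:ℝ)+1+j)^2 :=
        Summable.sum_le_tsum _ (fun j _ => by positivity) (sumShift N)


lemma part1 (T N : ℕ) (hNT : N = 2*T+1)
    (Ω : Type) [MeasureSpace Ω] (hprob : IsProbabilityMeasure (volume : Measure Ω))
    (X : Fin N → Ω → ℝ)
    (hVar : ∀ k : ℤ, k ≠ 0 →
      ∫ ω, ‖∑ n, Complex.exp (2*π*Complex.I*(k:ℂ)*(X n ω : ℂ))‖^2 =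
        (N:ℝ) - max ((N:ℝ) - |(k:ℝ)|) 0) :
    ∫ ω, (1/3 : ℝ) * ∑' k : {k : ℤ // k ≠ 0},
        (3/(2*π^2*((k:ℤ):ℝ)^2)) *
          ‖(1/N : ℂ) * ∑ n, Complex.exp (2*π*Complex.I*((k:ℤ):ℂ)*(X n ω : ℂ))‖^2
      = S15 N := by
  have hN1 : 1 ≤ N := by omega
  have hNpos : (0:ℝ) < N := by exact_mod_cast hN1
  have hπ : (0:ℝ) < π := pi_pos
  -- abbreviations
  set g : ℤ → Ω → ℝ :=
    fun k ω => ‖∑ n, Complex.exp (2*π*Complex.I*(k:ℂ)*(X n ω : ℂ))‖^2 with hgdef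
  set v : ℤ → ℝ := fun k => (N:ℝ) - max ((N:ℝ) - |(k:ℝ)|) 0 with hvdef
  set cc : ℤ → ℝ := fun k => 3/(2*π^2*(k:ℝ)^2) * (1/(N:ℝ))^2 with hccdef
  have hgnn : ∀ k ω, 0 ≤ g k ω := fun k ω => by simp only [hgdef]; positivity
  have hccnn : ∀ k, 0 ≤ cc k := fun k => by simp only [hccdef]; positivity
  have hvar' : ∀ k : ℤ, k ≠ 0 → ∫ ω, g k ω = v k := hVar
  have hvpos : ∀ k : ℤ, k ≠ 0 → 0 < v k := by
    intro k hk
    have h1 : (1:ℝ) ≤ |(k:ℝ)| := by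
      have : (1:ℤ) ≤ |k| := Int.one_le_abs hk
      calc (1:ℝ) ≤ ((|k| : ℤ) : ℝ) := by exact_mod_cast this
        _ = |(k:ℝ)| := by push_cast; ring
    have : max ((N:ℝ) - |(k:ℝ)|) 0 < N := max_lt (by linarith) hNpos
    simp only [hvdef]
    linarith
  have hvnn : ∀ k : ℤ, 0 ≤ v k := by
    intro k
    have h0 : (0:ℝ) ≤ |(k:ℝ)| := abs_nonneg _
    have : max ((N:ℝ) - |(k:ℝ)|) 0 ≤ N := max_le (by linarith) hNpos.le
    simp only [hvdef]; linarith
  have hvle : ∀ k : ℤ, v k ≤ N := by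
    intro k
    have : (0:ℝ) ≤ max ((N:ℝ) - |(k:ℝ)|) 0 := le_max_right _ _
    simp only [hvdef]; linarith
  have hgInt : ∀ k : ℤ, k ≠ 0 → Integrable (g k) volume := by
    intro k hk
    by_contra hcon
    have h := hvar' k hk
    rw [integral_undef hcon] at h
    exact absurd h.symm (hvpos k hk).ne'
  -- the series a over ℤ
  set a : ℤ → ℝ := fun k => cc k * v k with hadef
  have ha0 : a 0 = 0 := by
    simp only [hadef, hvdef]
    norm_num
  have haneg : ∀ k : ℤ, a (-k) = a k := by
    intro k
    simp only [hadef, hccdef, hvdef]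
    push_cast
    rw [neg_sq, abs_neg]
  have hann : ∀ k : ℤ, 0 ≤ a k := fun k => mul_nonneg (hccnn k) (hvnn k)
  set K : ℝ := 3/(2*π^2) * ((1/(N:ℝ))^2 * N) with hKdef
  have habound : ∀ k : ℤ, a k ≤ K * (1/((k:ℝ)^2)) := by
    intro k
    have h1 : a k ≤ cc k * N := mul_le_mul_of_nonneg_left (hvle k) (hccnn k)
    have h2 : cc k * N = K * (1/((k:ℝ)^2)) := by
      simp only [hccdef, hKdef]
      ring
    linarith
  set b : ℕ → ℝ := fun n => a ((n:ℤ)+1) with hbdef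
  have hbSummable : Summable b := by
    apply Summable.of_nonneg_of_le (fun n => hann _) _ (sumNat.mul_left K)
    intro n
    have := habound ((n:ℤ)+1)
    convert this using 2
    push_cast
    ring
  have hbneg : Summable (fun n : ℕ => a (-((n:ℤ)+1))) :=
    hbSummable.congr (fun n => (haneg ((n:ℤ)+1)).symm)
  have haSummable : Summable a := Summable.of_add_one_of_neg_add_one hbSummable hbneg
  -- step 1: rewrite the integrand
  have key : ∀ ω : Ω, (1/3 : ℝ) * ∑' k : {k : ℤ // k ≠ 0},
        (3/(2*π^2*((k:ℤ):ℝ)^2)) *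
          ‖(1/N : ℂ) * ∑ n, Complex.exp (2*π*Complex.I*((k:ℤ):ℂ)*(X n ω : ℂ))‖^2
      = (1/3 : ℝ) * ∑' k : {k : ℤ // k ≠ 0}, cc k.1 * g k.1 ω := by
    intro ω
    congr 1
    apply tsum_congr
    intro k
    have hn : ‖(1/(N:ℂ))‖ = 1/(N:ℝ) := by
      rw [norm_div, norm_one, Complex.norm_natCast]
    simp only [hgdef, hccdef]
    rw [norm_mul, mul_pow, hn]
    ring
  rw [integral_congr_ae (Eventually.of_forall key)]
  rw [integral_const_mul]
  -- step 2: swap integral and sum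
  have hFint : ∀ k : {k : ℤ // k ≠ 0}, Integrable (fun ω => cc k.1 * g k.1 ω) volume :=
    fun k => (hgInt k.1 k.2).const_mul _
  have heval : ∀ k : {k : ℤ // k ≠ 0}, ∫ ω, cc k.1 * g k.1 ω = a k.1 := by
    intro k
    rw [integral_const_mul, hvar' k.1 k.2]
  have hnormeval : ∀ k : {k : ℤ // k ≠ 0}, ∫ ω, ‖cc k.1 * g k.1 ω‖ = a k.1 := by
    intro k
    rw [← heval k]
    congr 1
    funext ω
    exact Real.norm_of_nonneg (mul_nonneg (hccnn _) (hgnn _ _))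
  have hnorm : Summable (fun k : {k : ℤ // k ≠ 0} => ∫ ω, ‖cc k.1 * g k.1 ω‖) := by
    apply Summable.congr _ (fun k => (hnormeval k).symm)
    exact haSummable.comp_injective Subtype.val_injective
  rw [← integral_tsum_of_summable_integral_norm hFint hnorm]
  rw [tsum_congr heval]
  -- step 3: compute the sum
  have hsub : ∑' k : {k : ℤ // k ≠ 0}, a k.1 = ∑' k : ℤ, a k := by
    apply tsum_subtype_eq_of_support_subset
    intro k hk
    simp only [Function.mem_support] at hk
    exact fun h0 => hk (h0 ▸ ha0)
  rw [hsub, tsum_of_add_one_of_neg_add_one hbSummable hbneg, ha0]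
  have hnegsum : ∑' n : ℕ, a (-((n:ℤ)+1)) = ∑' n : ℕ, a ((n:ℤ)+1) :=
    tsum_congr fun n => haneg _
  rw [hnegsum]
  rw [show (∑' n : ℕ, a ((n:ℤ)+1)) = ∑ i ∈ Finset.range N, b i + ∑' i : ℕ, b (i+N) from
    (Summable.sum_add_tsum_nat_add N hbSummable).symm]
  have hπ' : π ≠ 0 := hπ.ne'
  have hN' : (N:ℝ) ≠ 0 := hNpos.ne'
  have hhead : ∑ i ∈ Finset.range N, b i
      = 3/(2*π^2*(N:ℝ)^2) * ∑ k ∈ Finset.Icc 1 N, (1/(k:ℝ)) := by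
    rw [Finset.mul_sum, ← Finset.Ico_add_one_right_eq_Icc, Finset.sum_Ico_eq_sum_range]
    norm_num
    apply Finset.sum_congr rfl
    intro i hi
    rw [Finset.mem_range] at hi
    have hi1 : (i:ℝ)+1 ≤ N := by exact_mod_cast Nat.succ_le_of_lt hi
    simp only [hbdef, hadef, hccdef, hvdef]
    push_cast
    rw [abs_of_pos (by positivity : (0:ℝ) < (i:ℝ)+1)]
    rw [max_eq_left (by linarith)]
    have h1 : (i:ℝ)+1 ≠ 0 := by positivity
    field_simp
    ring
  have htail : ∑' i : ℕ, b (i+N) = 3/(2*π^2*(N:ℝ)) * ∑' j : ℕ, 1/((N:ℝ)+1+j)^2 := by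
    rw [← tsum_mul_left]
    apply tsum_congr
    intro j
    have hj0 : (0:ℝ) ≤ (j:ℝ) := Nat.cast_nonneg j
    simp only [hbdef, hadef, hccdef, hvdef]
    push_cast
    rw [abs_of_pos (by positivity : (0:ℝ) < (j:ℝ)+(N:ℝ)+1)]
    rw [max_eq_right (by linarith)]
    have h2 : ((j:ℝ)+(N:ℝ)+1) ≠ 0 := by positivity
    field_simp
    ring
  rw [hhead, htail]
  unfold S15
  field_simp
  ring

lemma part2 (N : ℕ) (hN : 1 ≤ N) :
    |S15 N - (Real.log N + Real.eulerMascheroniConstant + 1)/(π^2*(N:ℝ)^2)| ≤ 1 / (N:ℝ)^3 := by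
  have hn : (1:ℝ) ≤ (N:ℝ) := by exact_mod_cast hN
  have hn0 : (0:ℝ) < (N:ℝ) := by linarith
  have hπ : (0:ℝ) < π := pi_pos
  have hπ2 : (1:ℝ) ≤ π^2 := by nlinarith [pi_gt_three]
  have hH : ∑ k ∈ Finset.Icc 1 N, (1/(k:ℝ)) = ((harmonic N : ℚ) : ℝ) := by
    rw [harmonic_eq_sum_Icc]
    push_cast
    exact Finset.sum_congr rfl (fun k _ => one_div _)
  -- bounds on x := H - log N - γ
  have hA := Real.eulerMascheroniConstant_lt_eulerMascheroniSeq' N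
  rw [Real.eulerMascheroniSeq', if_neg (by omega : ¬ N = 0)] at hA
  have hB := Real.eulerMascheroniSeq_lt_eulerMascheroniConstant N
  rw [Real.eulerMascheroniSeq] at hB
  have hC : Real.log ((N:ℝ)+1) - Real.log N ≤ 1/(N:ℝ) := by
    rw [← Real.log_div (by positivity) (by positivity)]
    have h1 := Real.log_le_sub_one_of_pos (show (0:ℝ) < ((N:ℝ)+1)/N by positivity)
    have h2 : ((N:ℝ)+1)/N - 1 = 1/N := by field_simp; ring
    linarith
  set x : ℝ := ((harmonic N : ℚ) : ℝ) - Real.log N - Real.eulerMascheroniConstant with hxdef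
  have hx0 : 0 ≤ x := by simp only [hxdef]; linarith
  have hx1 : x ≤ 1/(N:ℝ) := by simp only [hxdef]; linarith
  set y : ℝ := ∑' j : ℕ, 1/((N:ℝ)+1+j)^2 with hydef
  have hy1 : y ≤ 1/(N:ℝ) := tsum_shift_le N hN
  have hy0 : 1/((N:ℝ)+1) ≤ y := le_tsum_shift N
  have key : S15 N - (Real.log N + Real.eulerMascheroniConstant + 1)/(π^2*(N:ℝ)^2)
      = (x*(N:ℝ) + y*(N:ℝ)^2 - (N:ℝ))/(π^2*(N:ℝ)^3) := by
    rw [S15, hH]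
    rw [hxdef]
    field_simp
    ring
  have hnum : |x*(N:ℝ) + y*(N:ℝ)^2 - (N:ℝ)| ≤ 1 := by
    rw [abs_le]
    constructor
    · have hy0' : 1 ≤ y * ((N:ℝ)+1) := by
        rw [div_le_iff₀ (by positivity)] at hy0
        linarith
      nlinarith [mul_nonneg hx0 hn0.le, hy0.trans hy1]
    · have hx1' : x * (N:ℝ) ≤ 1 := by
        rw [le_div_iff₀ hn0] at hx1
        linarith
      have hy1' : y * (N:ℝ) ≤ 1 := by
        rw [le_div_iff₀ hn0] at hy1
        linarith
      have hyn : 0 ≤ y := le_trans (by positivity) hy0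
      nlinarith [mul_le_mul_of_nonneg_right hy1' hn0.le]
  calc |S15 N - (Real.log N + Real.eulerMascheroniConstant + 1)/(π^2*(N:ℝ)^2)|
      = |x*(N:ℝ) + y*(N:ℝ)^2 - (N:ℝ)|/(π^2*(N:ℝ)^3) := by
        rw [key, abs_div, abs_of_pos (show (0:ℝ) < π^2*(N:ℝ)^3 by positivity)]
    _ ≤ 1/(N:ℝ)^3 := by
        rw [div_le_div_iff₀ (by positivity) (by positivity)]
        nlinarith [abs_nonneg (x*(N:ℝ) + y*(N:ℝ)^2 - (N:ℝ)), pow_pos hn0 3]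

theorem stmt_15 :
    (∀ (T N : ℕ), N = 2*T+1 →
      ∀ (Ω : Type) (_ : MeasureSpace Ω),
        IsProbabilityMeasure (volume : Measure Ω) →
      ∀ X : Fin N → Ω → ℝ,
      (∀ k : ℤ, k ≠ 0 →
        ∫ ω, ‖∑ n, Complex.exp (2*π*Complex.I*(k:ℂ)*(X n ω : ℂ))‖^2 =
          (N:ℝ) - max ((N:ℝ) - |(k:ℝ)|) 0) →
      ∫ ω, (1/3 : ℝ) * ∑' k : {k : ℤ // k ≠ 0},
          (3/(2*π^2*((k:ℤ):ℝ)^2)) *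
            ‖(1/N : ℂ) * ∑ n, Complex.exp (2*π*Complex.I*((k:ℤ):ℂ)*(X n ω : ℂ))‖^2
        = S15 N) ∧
    (∃ C > 0, ∀ N : ℕ, 1 ≤ N →
      abs (S15 N - (Real.log N + Real.eulerMascheroniConstant + 1)/(π^2*(N:ℝ)^2)) ≤
        C / (N:ℝ)^3) := by
  constructor
  · intro T N hNT Ω hΩ hprob X hVar
    exact part1 T N hNT Ω hprob X hVar
  · exact ⟨1, one_pos, fun N hN => by simpa using part2 N hN⟩
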